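/- arXiv:1703.04121 — 5 statements merged into one kernel-verified Lean document; each statement's English description precedes it below -/
import Mathlib

section
/- For every vector X ∈ V and every 3-form T on V, the following identity holds in Cl(V): ∑_{j=1}^{n} T(X, e_j) · (e_j ⌟ T) = −(1/2) ∑_{j=1}^{n} e_j · (X ⌟ T) · (e_j ⌟ T) + (3/2) (X ⌟ T) · T. -/
noncomputable section

open scoped RealInnerProductSpace

variable {V : Type*} [NormedAddCommGroup V] [InnerProductSpace ℝ V]

/-- The quadratic form `Q(v) = -⟨v,v⟩` on a real inner product space, so that
`X·Y + Y·X = -2⟨X,Y⟩` holds in the Clifford algebra. -/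
def negInnerQuadraticForm (V : Type*) [NormedAddCommGroup V] [InnerProductSpace ℝ V] :
    QuadraticForm ℝ V :=
  - LinearMap.BilinMap.toQuadraticMap (innerₗ V : LinearMap.BilinForm ℝ V)

/-- The interior product (contraction) `X ⌟ ω` of an exterior form `ω` by a vector `X`,
using the inner product to identify `X` with a dual vector. -/
def interiorProd (X : V) (ω : ExteriorAlgebra ℝ V) : ExteriorAlgebra ℝ V :=
  CliffordAlgebra.contractLeft (Q := (0 : QuadraticForm ℝ V))
    (innerₗ V X) ω

/-- The canonical linear isomorphism from the exterior algebra to the Clifford algebra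
`Cl(V)` of `Q(v) = -⟨v,v⟩`, sending `e_{i₁} ∧ ⋯ ∧ e_{iₚ}` (for orthonormal vectors) to the
Clifford product `e_{i₁} ⋯ e_{iₚ}`. -/
def exteriorToClifford (ω : ExteriorAlgebra ℝ V) :
    CliffordAlgebra (negInnerQuadraticForm V) :=
  letI : Invertible (2 : ℝ) := invertibleOfNonzero two_ne_zero
  (CliffordAlgebra.equivExterior (negInnerQuadraticForm V)).symm ω

open CliffordAlgebra

lemma cl_eq_changeForm (ω : ExteriorAlgebra ℝ V) :
    exteriorToClifford ω =
      letI : Invertible (2 : ℝ) := invertibleOfNonzero two_ne_zero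
      changeForm (changeForm.neg_proof
        (changeForm.associated_neg_proof (Q := negInnerQuadraticForm V))) ω := rfl

lemma iP_ι (v a : V) :
    interiorProd v (ExteriorAlgebra.ι ℝ a) = algebraMap ℝ _ ⟪v, a⟫ :=
  contractLeft_ι _ _ _

lemma iP_algebraMap (v : V) (r : ℝ) :
    interiorProd v (algebraMap ℝ (ExteriorAlgebra ℝ V) r) = 0 :=
  contractLeft_algebraMap _ _ _

lemma iP_ι_mul (v a : V) (ω : ExteriorAlgebra ℝ V) :
    interiorProd v (ExteriorAlgebra.ι ℝ a * ω) = ⟪v, a⟫ • ω - ExteriorAlgebra.ι ℝ a * interiorProd v ω :=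
  contractLeft_ι_mul _ _ _

lemma iP_iP (v : V) (ω : ExteriorAlgebra ℝ V) : interiorProd v (interiorProd v ω) = 0 :=
  contractLeft_contractLeft _ _

lemma iP_add (v : V) (x y : ExteriorAlgebra ℝ V) :
    interiorProd v (x + y) = interiorProd v x + interiorProd v y :=
  map_add (CliffordAlgebra.contractLeft (innerₗ V v)) x y

lemma negQ_apply (v : V) : negInnerQuadraticForm V v = -⟪v, v⟫ := rfl

lemma B_eq (m : V) :
    letI : Invertible (2 : ℝ) := invertibleOfNonzero two_ne_zero
    (-(QuadraticMap.associated (R := ℝ) (-(negInnerQuadraticForm V)))) m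
      = -(innerₗ V m) := by
  letI : Invertible (2 : ℝ) := invertibleOfNonzero two_ne_zero
  ext n
  simp only [LinearMap.neg_apply, QuadraticMap.associated_apply, QuadraticMap.neg_apply,
    negQ_apply, neg_neg]
  rw [real_inner_add_add_self m n]
  show -((2:ℝ)⁻¹ • (⟪m,m⟫ + 2*⟪m,n⟫ + ⟪n,n⟫ - ⟪m,m⟫ - ⟪n,n⟫)) = -⟪m,n⟫
  rw [smul_eq_mul]; ring

lemma cl_add (x y : ExteriorAlgebra ℝ V) :
    exteriorToClifford (x + y) = exteriorToClifford x + exteriorToClifford y := by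
  rw [cl_eq_changeForm, cl_eq_changeForm, cl_eq_changeForm]; exact map_add _ x y

lemma cl_smul (r : ℝ) (x : ExteriorAlgebra ℝ V) :
    exteriorToClifford (r • x) = r • exteriorToClifford x := by
  rw [cl_eq_changeForm, cl_eq_changeForm]; exact map_smul _ r x

lemma cl_sub (x y : ExteriorAlgebra ℝ V) :
    exteriorToClifford (x - y) = exteriorToClifford x - exteriorToClifford y := by
  rw [cl_eq_changeForm, cl_eq_changeForm, cl_eq_changeForm]; exact map_sub _ x y

lemma cl_algebraMap (r : ℝ) :
    exteriorToClifford (algebraMap ℝ (ExteriorAlgebra ℝ V) r)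
      = algebraMap ℝ (CliffordAlgebra (negInnerQuadraticForm V)) r := by
  rw [cl_eq_changeForm]; exact changeForm_algebraMap _ r

lemma cl_ι (a : V) :
    exteriorToClifford (ExteriorAlgebra.ι ℝ a) = ι (negInnerQuadraticForm V) a := by
  rw [cl_eq_changeForm]; exact changeForm_ι _ a

lemma cl_interiorProd (v : V) (ω : ExteriorAlgebra ℝ V) :
    exteriorToClifford (interiorProd v ω)
      = contractLeft (innerₗ V v) (exteriorToClifford ω) := by
  rw [cl_eq_changeForm, cl_eq_changeForm]
  exact changeForm_contractLeft _ _ ω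

lemma cl_ι_mul (m : V) (ω : ExteriorAlgebra ℝ V) :
    exteriorToClifford (ExteriorAlgebra.ι ℝ m * ω)
      = ι (negInnerQuadraticForm V) m * exteriorToClifford ω
        + exteriorToClifford (interiorProd m ω) := by
  rw [cl_interiorProd, cl_eq_changeForm (ExteriorAlgebra.ι ℝ m * ω), cl_eq_changeForm ω,
    changeForm_ι_mul, B_eq]
  simp only [map_neg, LinearMap.neg_apply, sub_neg_eq_add]

/-- The submodule of `p`-forms, i.e. the `p`-th exterior power inside the exterior algebra. -/
def pForms (V : Type*) [NormedAddCommGroup V] [InnerProductSpace ℝ V] (p : ℕ) :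
    Submodule ℝ (ExteriorAlgebra ℝ V) :=
  LinearMap.range (ExteriorAlgebra.ι ℝ : V →ₗ[ℝ] ExteriorAlgebra ℝ V) ^ p

/-- Evaluation `T(X,Y,Z)` of a 3-form `T` (given as an element of the exterior algebra):
the scalar part of the triple contraction `Z ⌟ (Y ⌟ (X ⌟ T))`. -/
def eval3 (T : ExteriorAlgebra ℝ V) (X Y Z : V) : ℝ :=
  ExteriorAlgebra.algebraMapInv (interiorProd Z (interiorProd Y (interiorProd X T)))

lemma iP_lower {p : ℕ} {ω : ExteriorAlgebra ℝ V} (hω : ω ∈ pForms V p) (v : V) :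
    interiorProd v ω ∈ pForms V (p - 1) ∧ (p = 0 → interiorProd v ω = 0) := by
  refine Submodule.pow_induction_on_left'
    (M := LinearMap.range (ExteriorAlgebra.ι ℝ : V →ₗ[ℝ] ExteriorAlgebra ℝ V))
    (C := fun n x _ => interiorProd v x ∈ pForms V (n - 1) ∧ (n = 0 → interiorProd v x = 0))
    ?_ ?_ ?_ hω
  · intro r
    rw [iP_algebraMap]
    exact ⟨zero_mem _, fun _ => rfl⟩
  · intro x y i _ _ hx hy
    refine ⟨?_, fun hi => ?_⟩
    · rw [iP_add]; exact add_mem hx.1 hy.1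
    · rw [iP_add, hx.2 hi, hy.2 hi, add_zero]
  · rintro _ ⟨a, rfl⟩ i x hx ⟨h1, h2⟩
    refine ⟨?_, fun hi => absurd hi (Nat.succ_ne_zero i)⟩
    rw [iP_ι_mul]
    have hsm : ⟪v, a⟫ • x ∈ pForms V (i + 1 - 1) := Submodule.smul_mem _ _ hx
    cases i with
    | zero =>
      rw [h2 rfl, mul_zero, sub_zero]
      exact hsm
    | succ j =>
      refine sub_mem hsm ?_
      have : ExteriorAlgebra.ι ℝ a * interiorProd v x ∈
          LinearMap.range (ExteriorAlgebra.ι ℝ : V →ₗ[ℝ] ExteriorAlgebra ℝ V) ^ (j + 1) := by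
        rw [pow_succ']
        exact Submodule.mul_mem_mul ⟨a, rfl⟩ h1
      exact this

lemma numberOp {n : ℕ} (e : OrthonormalBasis (Fin n) ℝ V) {p : ℕ} {ω : ExteriorAlgebra ℝ V}
    (hω : ω ∈ pForms V p) :
    ∑ j : Fin n, ExteriorAlgebra.ι ℝ (e j) * interiorProd (e j) ω = (p : ℝ) • ω := by
  refine Submodule.pow_induction_on_left'
    (M := LinearMap.range (ExteriorAlgebra.ι ℝ : V →ₗ[ℝ] ExteriorAlgebra ℝ V))
    (C := fun q x _ => ∑ j : Fin n, ExteriorAlgebra.ι ℝ (e j) * interiorProd (e j) x = (q : ℝ) • x)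
    ?_ ?_ ?_ hω
  · intro r
    simp [iP_algebraMap]
  · intro x y i _ _ hx hy
    simp only [iP_add, mul_add, Finset.sum_add_distrib, hx, hy, smul_add]
  · rintro _ ⟨a, rfl⟩ i x _ hx
    have step : ∀ j : Fin n,
        ExteriorAlgebra.ι ℝ (e j) * interiorProd (e j) (ExteriorAlgebra.ι ℝ a * x)
          = ⟪e j, a⟫ • (ExteriorAlgebra.ι ℝ (e j) * x)
            + ExteriorAlgebra.ι ℝ a * (ExteriorAlgebra.ι ℝ (e j) * interiorProd (e j) x) := by
      intro j
      rw [iP_ι_mul, mul_sub, mul_smul_comm, ← mul_assoc, ← mul_assoc]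
      have hanti : ExteriorAlgebra.ι ℝ (e j) * ExteriorAlgebra.ι ℝ a
          = -(ExteriorAlgebra.ι ℝ a * ExteriorAlgebra.ι ℝ (e j)) := by
        have := ExteriorAlgebra.ι_add_mul_swap (R := ℝ) (e j) a
        linear_combination (norm := noncomm_ring) this
      rw [hanti]
      noncomm_ring
    rw [Finset.sum_congr rfl fun j _ => step j, Finset.sum_add_distrib]
    have hfirst : ∑ j : Fin n, ⟪e j, a⟫ • (ExteriorAlgebra.ι ℝ (e j) * x)
        = ExteriorAlgebra.ι ℝ a * x := by
      simp_rw [← smul_mul_assoc, ← Finset.sum_mul, ← map_smul, ← map_sum, e.sum_repr' a]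
    rw [hfirst, ← Finset.mul_sum, hx, Nat.cast_succ, add_smul, one_smul, mul_smul_comm]
    abel

lemma clifford_swap (x y : V) :
    ι (negInnerQuadraticForm V) x * ι (negInnerQuadraticForm V) y
      = algebraMap ℝ _ (-(2 * ⟪x, y⟫)) - ι (negInnerQuadraticForm V) y * ι (negInnerQuadraticForm V) x := by
  have h := ι_mul_ι_add_swap (Q := negInnerQuadraticForm V) x y
  have hpolar : QuadraticMap.polar (negInnerQuadraticForm V) x y = -(2 * ⟪x, y⟫) := by
    simp only [QuadraticMap.polar, negQ_apply, real_inner_add_add_self]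
    ring
  rw [hpolar] at h
  linear_combination (norm := noncomm_ring) h

lemma comm2 {S : ExteriorAlgebra ℝ V} (hS : S ∈ pForms V 2) (v : V) :
    ι (negInnerQuadraticForm V) v * exteriorToClifford S
        - exteriorToClifford S * ι (negInnerQuadraticForm V) v
      = (-2 : ℝ) • exteriorToClifford (interiorProd v S) := by
  rw [show pForms V 2 = LinearMap.range (ExteriorAlgebra.ι ℝ : V →ₗ[ℝ] ExteriorAlgebra ℝ V) *
      LinearMap.range (ExteriorAlgebra.ι ℝ : V →ₗ[ℝ] ExteriorAlgebra ℝ V) from by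
    rw [pForms, pow_two]] at hS
  refine Submodule.mul_induction_on hS (fun a ha b hb => ?_) (fun x y ihx ihy => ?_)
  · obtain ⟨x, rfl⟩ := ha
    obtain ⟨y, rfl⟩ := hb
    have hcl : exteriorToClifford (ExteriorAlgebra.ι ℝ x * ExteriorAlgebra.ι ℝ y)
        = ι (negInnerQuadraticForm V) x * ι (negInnerQuadraticForm V) y
          + algebraMap ℝ _ ⟪x, y⟫ := by
      rw [cl_ι_mul, cl_ι, iP_ι, cl_algebraMap]
    have hint : interiorProd v (ExteriorAlgebra.ι ℝ x * ExteriorAlgebra.ι ℝ y)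
        = ⟪v, x⟫ • ExteriorAlgebra.ι ℝ y - ⟪v, y⟫ • ExteriorAlgebra.ι ℝ x := by
      rw [iP_ι_mul, iP_ι]
      rw [← Algebra.commutes ⟪v, y⟫ (ExteriorAlgebra.ι ℝ x), ← Algebra.smul_def]
    rw [hcl, hint, cl_sub, cl_smul, cl_smul, cl_ι, cl_ι]
    have h1 := clifford_swap (V := V) v x
    have h2 := clifford_swap (V := V) v y
    simp only [Algebra.algebraMap_eq_smul_one] at h1 h2 ⊢
    rw [mul_add, add_mul, ← mul_assoc, h1, sub_mul, mul_assoc, h2, mul_sub]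
    simp only [smul_mul_assoc, mul_smul_comm, one_mul, mul_one, smul_sub, smul_smul, smul_add,
      mul_assoc]
    module
  · rw [cl_add, iP_add, cl_add]
    rw [mul_add, add_mul, smul_add]
    rw [← ihx, ← ihy]
    abel

lemma sum3 {n : ℕ} (e : OrthonormalBasis (Fin n) ℝ V) {T : ExteriorAlgebra ℝ V}
    (hT : T ∈ pForms V 3) :
    ∑ j : Fin n, ι (negInnerQuadraticForm V) (e j) * exteriorToClifford (interiorProd (e j) T)
      = (3 : ℝ) • exteriorToClifford T := by
  have step : ∀ j : Fin n,
      ι (negInnerQuadraticForm V) (e j) * exteriorToClifford (interiorProd (e j) T)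
        = exteriorToClifford (ExteriorAlgebra.ι ℝ (e j) * interiorProd (e j) T) := by
    intro j
    rw [cl_ι_mul, iP_iP]
    have : exteriorToClifford (0 : ExteriorAlgebra ℝ V) = 0 := by
      rw [cl_eq_changeForm]; exact map_zero _
    rw [this, add_zero]
  rw [Finset.sum_congr rfl fun j _ => step j]
  have hsum : exteriorToClifford (∑ j : Fin n, ExteriorAlgebra.ι ℝ (e j) * interiorProd (e j) T)
      = ∑ j : Fin n, exteriorToClifford (ExteriorAlgebra.ι ℝ (e j) * interiorProd (e j) T) := by
    rw [cl_eq_changeForm]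
    rw [map_sum]
    exact Finset.sum_congr rfl fun j _ => (cl_eq_changeForm _).symm
  rw [← hsum, numberOp e hT]
  push_cast
  rw [cl_smul]

/-- For a 3-form `T` and any vector `X`:
`∑ⱼ T(X,eⱼ)·(eⱼ ⌟ T) = -(1/2) ∑ⱼ eⱼ·(X ⌟ T)·(eⱼ ⌟ T) + (3/2) (X ⌟ T)·T` in `Cl(V)`,
where `T(X,Y)` is the vector determined by `⟨T(X,Y), Z⟩ = T(X,Y,Z)` for all `Z`. -/
theorem stmt2 {n : ℕ} (e : OrthonormalBasis (Fin n) ℝ V)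
    (T : ExteriorAlgebra ℝ V) (hT : T ∈ pForms V 3)
    (TV : V → V → V) (hTV : ∀ X Y Z : V, ⟪TV X Y, Z⟫ = eval3 T X Y Z)
    (X : V) :
    ∑ j : Fin n, CliffordAlgebra.ι (negInnerQuadraticForm V) (TV X (e j)) *
        exteriorToClifford (interiorProd (e j) T) =
      -(1/2 : ℝ) • ∑ j : Fin n,
          CliffordAlgebra.ι (negInnerQuadraticForm V) (e j) *
            exteriorToClifford (interiorProd X T) *
            exteriorToClifford (interiorProd (e j) T) +
        (3/2 : ℝ) • (exteriorToClifford (interiorProd X T) * exteriorToClifford T) := by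
  set S := interiorProd X T with hS_def
  have hS : S ∈ pForms V 2 := by
    have := (iP_lower hT X).1
    simpa using this
  -- TV X (e j) corresponds to the 1-form  e j ⌟ S
  have hTVj : ∀ j : Fin n, ι (negInnerQuadraticForm V) (TV X (e j))
      = exteriorToClifford (interiorProd (e j) S) := by
    intro j
    have h1 : interiorProd (e j) S ∈ pForms V 1 := by
      have := (iP_lower hS (e j)).1
      simpa using this
    rw [show pForms V 1 = LinearMap.range (ExteriorAlgebra.ι ℝ : V →ₗ[ℝ] ExteriorAlgebra ℝ V) from
      by rw [pForms, pow_one]] at h1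
    obtain ⟨w, hw⟩ := h1
    have hTV_eq : TV X (e j) = w := by
      refine ext_inner_right ℝ fun Z => ?_
      rw [hTV]
      show ExteriorAlgebra.algebraMapInv (interiorProd Z (interiorProd (e j) (interiorProd X T))) = _
      rw [← hw, iP_ι]
      rw [ExteriorAlgebra.algebraMap_leftInverse V ⟪Z, w⟫]
      exact real_inner_comm w Z
    rw [hTV_eq, ← cl_ι, hw]
  have hcomm : ∀ j : Fin n, exteriorToClifford (interiorProd (e j) S)
      = (-(1/2) : ℝ) • (ι (negInnerQuadraticForm V) (e j) * exteriorToClifford S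
          - exteriorToClifford S * ι (negInnerQuadraticForm V) (e j)) := by
    intro j
    rw [comm2 hS (e j), smul_smul]
    norm_num
  calc ∑ j : Fin n, ι (negInnerQuadraticForm V) (TV X (e j)) *
          exteriorToClifford (interiorProd (e j) T)
      = ∑ j : Fin n, ((-(1/2) : ℝ) • (ι (negInnerQuadraticForm V) (e j) * exteriorToClifford S
          - exteriorToClifford S * ι (negInnerQuadraticForm V) (e j)))
          * exteriorToClifford (interiorProd (e j) T) := by
        exact Finset.sum_congr rfl fun j _ => by rw [hTVj j, hcomm j]
    _ = -(1/2 : ℝ) • ∑ j : Fin n, ι (negInnerQuadraticForm V) (e j) * exteriorToClifford S *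
          exteriorToClifford (interiorProd (e j) T)
        + (1/2 : ℝ) • (exteriorToClifford S *
            ∑ j : Fin n, ι (negInnerQuadraticForm V) (e j) *
              exteriorToClifford (interiorProd (e j) T)) := by
        rw [Finset.mul_sum, Finset.smul_sum, Finset.smul_sum, ← Finset.sum_add_distrib]
        refine Finset.sum_congr rfl fun j _ => ?_
        simp only [smul_mul_assoc, sub_mul, smul_sub, mul_assoc]
        module
    _ = -(1/2 : ℝ) • ∑ j : Fin n, ι (negInnerQuadraticForm V) (e j) * exteriorToClifford S *
          exteriorToClifford (interiorProd (e j) T)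
        + (3/2 : ℝ) • (exteriorToClifford S * exteriorToClifford T) := by
        rw [sum3 e hT, mul_smul_comm, smul_smul]
        norm_num
end
end

section
/- Let T be a 3-form on V. Then for every vector X ∈ V the following identity holds in Cl(V): ∑_{j=1}^{n} e_j · (T(X, e_j) ⌟ T) = −∑_{j=1}^{n} T(X, e_j) · (e_j ⌟ T). -/
noncomputable section

open scoped RealInnerProductSpace

variable {V : Type*} [NormedAddCommGroup V] [InnerProductSpace ℝ V]

set_option synthInstance.maxHeartbeats 1000000 in
/-- For a 3-form `T` and every vector `X`:
`∑ⱼ eⱼ·(T(X,eⱼ) ⌟ T) = -∑ⱼ T(X,eⱼ)·(eⱼ ⌟ T)` in `Cl(V)`, where `T(X,Y)` is the vector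
determined by `⟨T(X,Y), Z⟩ = T(X,Y,Z)` for all `Z`. -/
theorem stmt6 {n : ℕ} (e : OrthonormalBasis (Fin n) ℝ V)
    (T : ExteriorAlgebra ℝ V) (hT : T ∈ pForms V 3)
    (TV : V → V → V) (hTV : ∀ X Y Z : V, ⟪TV X Y, Z⟫ = eval3 T X Y Z)
    (X : V) :
    ∑ j : Fin n, CliffordAlgebra.ι (negInnerQuadraticForm V) (e j) *
        exteriorToClifford (interiorProd (TV X (e j)) T) =
      -∑ j : Fin n, CliffordAlgebra.ι (negInnerQuadraticForm V) (TV X (e j)) *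
        exteriorToClifford (interiorProd (e j) T) := by
  classical
  set c : Fin n → Fin n → ℝ := fun j i => eval3 T X (e j) (e i) with hc
  have hanti : ∀ j i, c j i = - c i j := by
    intro j i
    simp only [hc, eval3, interiorProd]
    rw [CliffordAlgebra.contractLeft_comm, map_neg]
  have hexp : ∀ j : Fin n, TV X (e j) = ∑ i, c j i • e i := by
    intro j
    conv_lhs => rw [← e.sum_repr' (TV X (e j))]
    refine Finset.sum_congr rfl fun i _ => ?_
    rw [real_inner_comm, hTV]
  have hilin : ∀ (j : Fin n) (ω : ExteriorAlgebra ℝ V),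
      interiorProd (TV X (e j)) ω = ∑ i, c j i • interiorProd (e i) ω := by
    intro j ω
    rw [hexp j]
    simp only [interiorProd, map_sum, map_smul, LinearMap.sum_apply, LinearMap.smul_apply]
  set F : Fin n → CliffordAlgebra (negInnerQuadraticForm V) :=
    fun i => exteriorToClifford (interiorProd (e i) T) with hF
  have hL : ∀ j : Fin n,
      CliffordAlgebra.ι (negInnerQuadraticForm V) (e j) *
        exteriorToClifford (interiorProd (TV X (e j)) T)
      = ∑ i, c j i • (CliffordAlgebra.ι (negInnerQuadraticForm V) (e j) * F i) := by
    intro j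
    rw [hilin j T]
    simp only [exteriorToClifford, map_sum, map_smul, Finset.mul_sum, mul_smul_comm, hF]
  have hR : ∀ j : Fin n,
      CliffordAlgebra.ι (negInnerQuadraticForm V) (TV X (e j)) *
        exteriorToClifford (interiorProd (e j) T)
      = ∑ i, c j i • (CliffordAlgebra.ι (negInnerQuadraticForm V) (e i) * F j) := by
    intro j
    rw [hexp j]
    simp only [map_sum, map_smul, Finset.sum_mul, smul_mul_assoc, hF]
  simp only [hL, hR]
  rw [← Finset.sum_neg_distrib]
  rw [Finset.sum_comm]
  refine Finset.sum_congr rfl fun j _ => ?_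
  rw [← Finset.sum_neg_distrib]
  refine Finset.sum_congr rfl fun i _ => ?_
  rw [hanti j i]
  simp
end
end

section
/- Let T be a 3-form on V, identified with its image in Cl(V). Then ∑_{j=1}^{n} e_j · T · (e_j ⌟ T) = −3 T·T − 2 ∑_{j=1}^{n} (e_j ⌟ T) · (e_j ⌟ T) in Cl(V). -/
noncomputable section

open scoped RealInnerProductSpace

variable {V : Type*} [NormedAddCommGroup V] [InnerProductSpace ℝ V]

namespace Stmt9Aux

open CliffordAlgebra

lemma negQF_apply (v : V) : negInnerQuadraticForm V v = -⟪v, v⟫ := rfl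

lemma polar_negQF (a b : V) :
    QuadraticMap.polar (⇑(negInnerQuadraticForm V)) a b = -(2 * ⟪a, b⟫) := by
  simp only [QuadraticMap.polar, negQF_apply, real_inner_add_add_self]
  ring

/-- Contraction on the Clifford side. -/
def cc (X : V) :
    CliffordAlgebra (negInnerQuadraticForm V) →ₗ[ℝ] CliffordAlgebra (negInnerQuadraticForm V) :=
  contractLeft (innerₗ V X)

lemma e2c_eq (ω : ExteriorAlgebra ℝ V) :
    exteriorToClifford ω =
      letI : Invertible (2 : ℝ) := invertibleOfNonzero two_ne_zero
      changeForm (changeForm.neg_proof (changeForm.associated_neg_proof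
        (Q := negInnerQuadraticForm V))) ω := rfl

lemma assoc_neg_eq :
    letI : Invertible (2 : ℝ) := invertibleOfNonzero two_ne_zero
    (-(QuadraticMap.associated (R := ℝ) (-(negInnerQuadraticForm V))))
      = - (innerₗ V : LinearMap.BilinForm ℝ V) := by
  letI : Invertible (2 : ℝ) := invertibleOfNonzero two_ne_zero
  have hsymm : ∀ x y : V, (innerₗ V : LinearMap.BilinForm ℝ V) x y = innerₗ V y x := by
    intro x y
    exact real_inner_comm y x
  have h0 : -(negInnerQuadraticForm V)
      = LinearMap.BilinMap.toQuadraticMap (innerₗ V : LinearMap.BilinForm ℝ V) := by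
    simp [negInnerQuadraticForm]
  rw [h0, QuadraticMap.associated_left_inverse _ hsymm]

lemma e2c_algebraMap (r : ℝ) :
    exteriorToClifford (algebraMap ℝ (ExteriorAlgebra ℝ V) r)
      = algebraMap ℝ (CliffordAlgebra (negInnerQuadraticForm V)) r := by
  simp only [e2c_eq]
  exact changeForm_algebraMap _ r

lemma e2c_ι_mul (m : V) (ω : ExteriorAlgebra ℝ V) :
    exteriorToClifford (ExteriorAlgebra.ι ℝ m * ω)
      = ι (negInnerQuadraticForm V) m * exteriorToClifford ω
        + cc m (exteriorToClifford ω) := by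
  simp only [e2c_eq]
  have hm := DFunLike.congr_fun (assoc_neg_eq (V := V)) m
  rw [changeForm_ι_mul, hm]
  simp only [LinearMap.neg_apply, map_neg, sub_neg_eq_add]
  rfl

lemma e2c_contractLeft (X : V) (ω : ExteriorAlgebra ℝ V) :
    exteriorToClifford (interiorProd X ω) = cc X (exteriorToClifford ω) := by
  simp only [e2c_eq]
  exact changeForm_contractLeft _ _ _

lemma cc_ι_mul (X a : V) (x : CliffordAlgebra (negInnerQuadraticForm V)) :
    cc X (ι (negInnerQuadraticForm V) a * x)
      = ⟪X, a⟫ • x - ι (negInnerQuadraticForm V) a * cc X x :=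
  contractLeft_ι_mul _ a x

lemma cc_algebraMap (X : V) (r : ℝ) :
    cc X (algebraMap ℝ (CliffordAlgebra (negInnerQuadraticForm V)) r) = 0 :=
  contractLeft_algebraMap _ _ r

lemma hswap (X a : V) :
    ι (negInnerQuadraticForm V) X * ι (negInnerQuadraticForm V) a
      = algebraMap ℝ _ (-(2 * ⟪X, a⟫)) -
        ι (negInnerQuadraticForm V) a * ι (negInnerQuadraticForm V) X := by
  rw [← polar_negQF]
  exact eq_sub_of_add_eq (ι_mul_ι_add_swap X a)

lemma ι_mul_cc (X a : V) (w : CliffordAlgebra (negInnerQuadraticForm V)) :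
    ι (negInnerQuadraticForm V) X * cc a w
      = ⟪a, X⟫ • w - cc a (ι (negInnerQuadraticForm V) X * w) := by
  rw [cc_ι_mul a X w]
  abel

lemma supercomm (X : V) (x : CliffordAlgebra (negInnerQuadraticForm V)) :
    ι (negInnerQuadraticForm V) X * x - involute x * ι (negInnerQuadraticForm V) X
      = (-2 : ℝ) • cc X x := by
  induction x using CliffordAlgebra.left_induction with
  | algebraMap r => simp [cc_algebraMap, Algebra.commutes]
  | add x y hx hy =>
      simp only [map_add, mul_add, add_mul, smul_add]
      rw [← hx, ← hy]; abel
  | ι_mul y m hy =>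
      have key : ι (negInnerQuadraticForm V) m * (ι (negInnerQuadraticForm V) X * y)
          = ι (negInnerQuadraticForm V) m * (involute y * ι (negInnerQuadraticForm V) X)
            + (-2 : ℝ) • (ι (negInnerQuadraticForm V) m * cc X y) := by
        rw [← mul_smul_comm, ← mul_add, ← hy]
        congr 1
        abel
      rw [map_mul, involute_ι, cc_ι_mul X m y, ← mul_assoc, hswap X m, sub_mul,
        ← Algebra.smul_def]
      simp only [neg_mul, mul_assoc]
      rw [key]
      module

lemma e2c_add (x y : ExteriorAlgebra ℝ V) :
    exteriorToClifford (x + y) = exteriorToClifford x + exteriorToClifford y := by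
  simp only [e2c_eq]
  exact map_add _ x y

lemma involute_cc (X : V) (x : CliffordAlgebra (negInnerQuadraticForm V)) :
    involute (cc X x) = - cc X (involute x) := by
  induction x using CliffordAlgebra.left_induction with
  | algebraMap r => simp [cc_algebraMap]
  | add x y hx hy => simp only [map_add, hx, hy]; abel
  | ι_mul y m hy =>
      rw [cc_ι_mul X m y]
      simp only [map_sub, map_smul, map_mul, involute_ι, hy, neg_mul, mul_neg, map_neg, neg_neg,
        sub_neg_eq_add, cc_ι_mul X m (involute y)]

lemma invol (p : ℕ) (T : ExteriorAlgebra ℝ V) (hT : T ∈ pForms V p) :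
    involute (exteriorToClifford T) = ((-1 : ℝ) ^ p) • exteriorToClifford T := by
  induction p generalizing T with
  | zero =>
      rw [pForms, pow_zero] at hT
      obtain ⟨r, rfl⟩ := Submodule.mem_one.mp hT
      simp [e2c_algebraMap]
  | succ p ih =>
      rw [pForms, pow_succ'] at hT
      refine Submodule.mul_induction_on hT ?_ ?_
      · rintro m ⟨a, rfl⟩ ω hω
        rw [e2c_ι_mul, map_add, map_mul, involute_ι, involute_cc, ih ω hω]
        simp only [neg_mul, mul_smul_comm, map_smul, smul_add, pow_succ]
        module
      · intro x y hx hy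
        rw [e2c_add, map_add, hx, hy, smul_add]

lemma sum_smul_ι_mul {n : ℕ} (e : OrthonormalBasis (Fin n) ℝ V) (a : V)
    (y : CliffordAlgebra (negInnerQuadraticForm V)) :
    ∑ j : Fin n, ⟪e j, a⟫ • (ι (negInnerQuadraticForm V) (e j) * y)
      = ι (negInnerQuadraticForm V) a * y := by
  calc ∑ j : Fin n, ⟪e j, a⟫ • (ι (negInnerQuadraticForm V) (e j) * y)
      = (∑ j : Fin n, ⟪e j, a⟫ • ι (negInnerQuadraticForm V) (e j)) * y := by
        rw [Finset.sum_mul]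
        simp [smul_mul_assoc]
    _ = (ι (negInnerQuadraticForm V) (∑ j : Fin n, ⟪e j, a⟫ • e j)) * y := by
        simp [map_sum, map_smul]
    _ = ι (negInnerQuadraticForm V) a * y := by rw [e.sum_repr']

lemma sum_smul_cc {n : ℕ} (e : OrthonormalBasis (Fin n) ℝ V) (a : V)
    (z : CliffordAlgebra (negInnerQuadraticForm V)) :
    ∑ j : Fin n, ⟪e j, a⟫ • cc (e j) z = cc a z := by
  calc ∑ j : Fin n, ⟪e j, a⟫ • cc (e j) z
      = cc (∑ j : Fin n, ⟪e j, a⟫ • e j) z := by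
        simp [cc, map_sum, map_smul, LinearMap.sum_apply, LinearMap.smul_apply]
    _ = cc a z := by rw [e.sum_repr']

lemma sumD {n : ℕ} (e : OrthonormalBasis (Fin n) ℝ V) (p : ℕ) (T : ExteriorAlgebra ℝ V)
    (hT : T ∈ pForms V p) :
    ∑ j : Fin n, ι (negInnerQuadraticForm V) (e j) * cc (e j) (exteriorToClifford T)
      = (p : ℝ) • exteriorToClifford T := by
  induction p generalizing T with
  | zero =>
      rw [pForms, pow_zero] at hT
      obtain ⟨r, rfl⟩ := Submodule.mem_one.mp hT
      simp [e2c_algebraMap, cc_algebraMap]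
  | succ p ih =>
      rw [pForms, pow_succ'] at hT
      refine Submodule.mul_induction_on hT ?_ ?_
      · rintro m ⟨a, rfl⟩ ω hω
        rw [e2c_ι_mul]
        set y := exteriorToClifford ω with hydef
        have hccj : ∀ j : Fin n, cc (e j) (ι (negInnerQuadraticForm V) a * y + cc a y)
            = ⟪e j, a⟫ • y - ι (negInnerQuadraticForm V) a * cc (e j) y
              - cc a (cc (e j) y) := by
          intro j
          rw [map_add, cc_ι_mul]
          have hcomm : cc (e j) (cc a y) = -(cc a (cc (e j) y)) := contractLeft_comm _ _ y
          rw [hcomm]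
          abel
        have hj : ∀ j : Fin n,
            ι (negInnerQuadraticForm V) (e j)
                * cc (e j) (ι (negInnerQuadraticForm V) a * y + cc a y)
            = ⟪e j, a⟫ • (ι (negInnerQuadraticForm V) (e j) * y)
              + ι (negInnerQuadraticForm V) a
                  * (ι (negInnerQuadraticForm V) (e j) * cc (e j) y)
              + (2 * ⟪e j, a⟫) • cc (e j) y
              - ⟪a, e j⟫ • cc (e j) y
              + cc a (ι (negInnerQuadraticForm V) (e j) * cc (e j) y) := by
          intro j
          rw [hccj j, mul_sub, mul_sub, mul_smul_comm, ← mul_assoc, hswap (e j) a, sub_mul,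
            ← Algebra.smul_def, ι_mul_cc (e j) a (cc (e j) y), mul_assoc]
          module
        simp only [hj]
        rw [Finset.sum_add_distrib, Finset.sum_sub_distrib, Finset.sum_add_distrib,
          Finset.sum_add_distrib]
        have hA := sum_smul_ι_mul e a y
        have hB : ∑ j : Fin n, ι (negInnerQuadraticForm V) a
              * (ι (negInnerQuadraticForm V) (e j) * cc (e j) y)
            = ι (negInnerQuadraticForm V) a * ((p : ℝ) • y) := by
          rw [← Finset.mul_sum, ih ω hω]
        have hC : ∑ j : Fin n, (2 * ⟪e j, a⟫) • cc (e j) y = (2 : ℝ) • cc a y := by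
          rw [← sum_smul_cc e a y, Finset.smul_sum]
          refine Finset.sum_congr rfl fun j _ => ?_
          rw [smul_smul]
        have hD : ∑ j : Fin n, ⟪a, e j⟫ • cc (e j) y = cc a y := by
          rw [← sum_smul_cc e a y]
          refine Finset.sum_congr rfl fun j _ => ?_
          rw [real_inner_comm]
        have hE : ∑ j : Fin n, cc a (ι (negInnerQuadraticForm V) (e j) * cc (e j) y)
            = cc a ((p : ℝ) • y) := by
          rw [← map_sum, ih ω hω]
        rw [hA, hB, hC, hD, hE]
        push_cast
        simp only [mul_smul_comm, map_smul, smul_add]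
        module
      · intro x y hx hy
        rw [e2c_add, smul_add, ← hx, ← hy, ← Finset.sum_add_distrib]
        refine Finset.sum_congr rfl fun j _ => ?_
        rw [map_add, mul_add]

end Stmt9Aux

/-- For a 3-form `T`:
`∑ⱼ eⱼ·T·(eⱼ ⌟ T) = -3 T·T - 2 ∑ⱼ (eⱼ ⌟ T)·(eⱼ ⌟ T)` in `Cl(V)`. -/
theorem stmt9 {n : ℕ} (e : OrthonormalBasis (Fin n) ℝ V)
    (T : ExteriorAlgebra ℝ V) (hT : T ∈ pForms V 3) :
    ∑ j : Fin n, CliffordAlgebra.ι (negInnerQuadraticForm V) (e j) *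
        exteriorToClifford T * exteriorToClifford (interiorProd (e j) T) =
      (-3 : ℝ) • (exteriorToClifford T * exteriorToClifford T) -
        (2 : ℝ) • ∑ j : Fin n, exteriorToClifford (interiorProd (e j) T) *
          exteriorToClifford (interiorProd (e j) T) := by
  set T' := exteriorToClifford T with hT'
  have hinv : CliffordAlgebra.involute T' = -T' := by
    have h := Stmt9Aux.invol 3 T hT
    have h3 : ((-1 : ℝ)) ^ 3 = -1 := by norm_num
    rw [← hT', h3, neg_smul, one_smul] at h
    exact h
  have hA : ∀ X : V, CliffordAlgebra.ι (negInnerQuadraticForm V) X * T'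
      = (-2 : ℝ) • Stmt9Aux.cc X T'
        - T' * CliffordAlgebra.ι (negInnerQuadraticForm V) X := by
    intro X
    have h := Stmt9Aux.supercomm X T'
    rw [hinv, neg_mul, sub_neg_eq_add] at h
    exact eq_sub_of_add_eq h
  have hsum : ∑ j : Fin n, CliffordAlgebra.ι (negInnerQuadraticForm V) (e j)
        * Stmt9Aux.cc (e j) T' = (3 : ℝ) • T' := by
    have h := Stmt9Aux.sumD e 3 T hT
    rw [← hT'] at h
    norm_num at h
    exact h
  have step : ∀ j : Fin n,
      CliffordAlgebra.ι (negInnerQuadraticForm V) (e j) * T' * Stmt9Aux.cc (e j) T'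
        = (-2 : ℝ) • (Stmt9Aux.cc (e j) T' * Stmt9Aux.cc (e j) T')
          - T' * (CliffordAlgebra.ι (negInnerQuadraticForm V) (e j)
              * Stmt9Aux.cc (e j) T') := by
    intro j
    rw [hA (e j), sub_mul, smul_mul_assoc, mul_assoc]
  simp only [Stmt9Aux.e2c_contractLeft, ← hT']
  simp only [step]
  rw [Finset.sum_sub_distrib, ← Finset.smul_sum, ← Finset.mul_sum, hsum, mul_smul_comm]
  module
end
end

section
/- Let T be a 3-form on V and let M be a module over Cl(V). Then for every family ψ_1, …, ψ_n of elements of M: ∑_{i=1}^{n} ∑_{j=1}^{n} ∑_{k=1}^{n} T(e_i, e_j, e_k) · e_i · e_j · ψ_k = 2 ∑_{k=1}^{n} (e_k ⌟ T) · ψ_k, where forms and vectors act on M through their images in Cl(V). -/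
noncomputable section

open scoped RealInnerProductSpace

variable {V : Type*} [NormedAddCommGroup V] [InnerProductSpace ℝ V]

namespace Stmt12Aux

local notation "ε" => ExteriorAlgebra.ι ℝ (M := V)
local notation "A" => CliffordAlgebra.ι (negInnerQuadraticForm V)

lemma ip_add (X : V) (a b : ExteriorAlgebra ℝ V) :
    interiorProd X (a + b) = interiorProd X a + interiorProd X b :=
  map_add _ _ _

lemma ip_sub (X : V) (a b : ExteriorAlgebra ℝ V) :
    interiorProd X (a - b) = interiorProd X a - interiorProd X b :=
  map_sub _ _ _

lemma ip_smul (X : V) (r : ℝ) (a : ExteriorAlgebra ℝ V) :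
    interiorProd X (r • a) = r • interiorProd X a :=
  map_smul _ _ _

lemma ip_ι (X a : V) : interiorProd X (ε a) = algebraMap ℝ _ ⟪X, a⟫ :=
  CliffordAlgebra.contractLeft_ι _ _ _

lemma ip_ι_mul (X a : V) (ω : ExteriorAlgebra ℝ V) :
    interiorProd X (ε a * ω) = ⟪X, a⟫ • ω - ε a * interiorProd X ω :=
  CliffordAlgebra.contractLeft_ι_mul _ _ _

lemma ip2 (X a b : V) :
    interiorProd X (ε a * ε b) = ⟪X, a⟫ • ε b - ⟪X, b⟫ • ε a := by
  rw [ip_ι_mul, ip_ι, ← Algebra.commutes, ← Algebra.smul_def]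

lemma ip3 (X x y z : V) :
    interiorProd X (ε x * ε y * ε z)
      = ⟪X, x⟫ • (ε y * ε z) - ⟪X, y⟫ • (ε x * ε z) + ⟪X, z⟫ • (ε x * ε y) := by
  rw [mul_assoc, ip_ι_mul, ip2, mul_sub, mul_smul_comm, mul_smul_comm]
  module

lemma amInv (r : ℝ) :
    ExteriorAlgebra.algebraMapInv (algebraMap ℝ (ExteriorAlgebra ℝ V) r) = r :=
  ExteriorAlgebra.algebraMap_leftInverse V r

lemma eval3_eq (x y z X Y Z : V) :
    eval3 (ε x * ε y * ε z) X Y Z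
      = ⟪X, x⟫ * ⟪Y, y⟫ * ⟪Z, z⟫ - ⟪X, x⟫ * ⟪Y, z⟫ * ⟪Z, y⟫
        - ⟪X, y⟫ * ⟪Y, x⟫ * ⟪Z, z⟫ + ⟪X, y⟫ * ⟪Y, z⟫ * ⟪Z, x⟫
        + ⟪X, z⟫ * ⟪Y, x⟫ * ⟪Z, y⟫ - ⟪X, z⟫ * ⟪Y, y⟫ * ⟪Z, x⟫ := by
  rw [eval3, ip3]
  rw [ip_add, ip_sub, ip_smul, ip_smul, ip_smul, ip2, ip2, ip2]
  simp only [smul_sub, smul_smul, ip_add, ip_sub, ip_smul, ip_ι, map_add, map_sub, map_smul,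
    amInv, smul_eq_mul]
  ring

lemma eval3_add (a b : ExteriorAlgebra ℝ V) (X Y Z : V) :
    eval3 (a + b) X Y Z = eval3 a X Y Z + eval3 b X Y Z := by
  simp only [eval3, ip_add, map_add]

lemma etc_add (a b : ExteriorAlgebra ℝ V) :
    exteriorToClifford (a + b) = exteriorToClifford a + exteriorToClifford b := by
  letI : Invertible (2 : ℝ) := invertibleOfNonzero two_ne_zero
  exact map_add _ a b

lemma etc_sub (a b : ExteriorAlgebra ℝ V) :
    exteriorToClifford (a - b) = exteriorToClifford a - exteriorToClifford b := by
  letI : Invertible (2 : ℝ) := invertibleOfNonzero two_ne_zero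
  exact map_sub _ a b

lemma etc_smul (r : ℝ) (a : ExteriorAlgebra ℝ V) :
    exteriorToClifford (r • a) = r • exteriorToClifford a := by
  letI : Invertible (2 : ℝ) := invertibleOfNonzero two_ne_zero
  exact map_smul _ r a

lemma bilin_symm : (innerₗ V : LinearMap.BilinForm ℝ V).IsSymm := by
  refine ⟨fun x y => ?_⟩
  exact real_inner_comm y x

lemma etc_ι_mul_ι (a b : V) :
    exteriorToClifford (ε a * ε b) = A a * A b + algebraMap ℝ _ ⟪a, b⟫ := by
  letI : Invertible (2 : ℝ) := invertibleOfNonzero two_ne_zero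
  have h1 : exteriorToClifford (V := V) = fun ω =>
      CliffordAlgebra.changeForm
        (CliffordAlgebra.changeForm.neg_proof
          (CliffordAlgebra.changeForm.associated_neg_proof (Q := negInnerQuadraticForm V))) ω :=
    rfl
  have h2 : (-(QuadraticMap.associated (R := ℝ) (-(negInnerQuadraticForm V)))) a b
      = -⟪a, b⟫ := by
    have h3 : -(negInnerQuadraticForm V)
        = LinearMap.BilinMap.toQuadraticMap (innerₗ V : LinearMap.BilinForm ℝ V) := neg_neg _
    rw [LinearMap.neg_apply, LinearMap.neg_apply, h3,
      QuadraticMap.associated_left_inverse _ bilin_symm.eq]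
    rfl
  rw [h1]
  dsimp only
  rw [CliffordAlgebra.changeForm_ι_mul_ι, h2, map_neg, sub_neg_eq_add]

lemma A_swap (a b : V) :
    A b * A a = -(A a * A b) - (2 * ⟪a, b⟫) • 1 := by
  have h := CliffordAlgebra.ι_mul_ι_add_swap (Q := negInnerQuadraticForm V) a b
  have hp : QuadraticMap.polar (⇑(negInnerQuadraticForm V)) a b = -(2 * ⟪a, b⟫) := by
    have hv : ∀ v : V, negInnerQuadraticForm V v = -⟪v, v⟫ := fun v => rfl
    simp only [QuadraticMap.polar, hv]
    rw [real_inner_add_add_self]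
    ring
  rw [hp] at h
  have h' := eq_sub_of_add_eq' h
  rw [h', map_neg, Algebra.algebraMap_eq_smul_one]
  module

section Sums

variable {n : ℕ} (e : OrthonormalBasis (Fin n) ℝ V)

lemma hA (a : V) : ∑ i, ⟪e i, a⟫ • A (e i) = A a := by
  conv_rhs => rw [← e.sum_repr' a]
  rw [map_sum]
  simp [map_smul]

lemma sum_AA (a b : V) (r : ℝ) :
    ∑ i, ∑ j, (⟪e i, a⟫ * ⟪e j, b⟫ * r) • (A (e i) * A (e j)) = r • (A a * A b) := by
  rw [← hA e a, ← hA e b, Finset.sum_mul, Finset.smul_sum]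
  refine Finset.sum_congr rfl fun i _ => ?_
  rw [Finset.mul_sum, Finset.smul_sum]
  refine Finset.sum_congr rfl fun j _ => ?_
  rw [mul_smul_comm, smul_smul, smul_mul_assoc, smul_smul]
  congr 1
  ring

lemma sum_comm3 {β : Type*} [AddCommMonoid β] {m : ℕ} (f : Fin m → Fin m → Fin m → β) :
    ∑ i, ∑ j, ∑ k, f i j k = ∑ k, ∑ i, ∑ j, f i j k :=
  calc ∑ i, ∑ j, ∑ k, f i j k
      = ∑ i, ∑ k, ∑ j, f i j k := Finset.sum_congr rfl (fun _ _ => Finset.sum_comm)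
    _ = ∑ k, ∑ i, ∑ j, f i j k := Finset.sum_comm

lemma key_clifford (x y z w : V) :
    ∑ i, ∑ j, eval3 (ε x * ε y * ε z) (e i) (e j) w • (A (e i) * A (e j))
      = (2 : ℝ) • exteriorToClifford (interiorProd w (ε x * ε y * ε z)) := by
  simp only [eval3_eq, sub_smul, add_smul, Finset.sum_sub_distrib, Finset.sum_add_distrib]
  rw [sum_AA e x y ⟪w, z⟫, sum_AA e x z ⟪w, y⟫, sum_AA e y x ⟪w, z⟫, sum_AA e y z ⟪w, x⟫,
    sum_AA e z x ⟪w, y⟫, sum_AA e z y ⟪w, x⟫]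
  rw [ip3, etc_add, etc_sub, etc_smul, etc_smul, etc_smul, etc_ι_mul_ι, etc_ι_mul_ι,
    etc_ι_mul_ι]
  rw [A_swap x y, A_swap x z, A_swap y z]
  simp only [Algebra.algebraMap_eq_smul_one]
  module

end Sums

end Stmt12Aux

open Stmt12Aux

/-- For a 3-form `T`, a module `M` over `Cl(V)` and a family `ψ` in `M`:
`∑ᵢ ∑ⱼ ∑ₖ T(eᵢ,eⱼ,eₖ) • eᵢ·eⱼ·ψₖ = 2 ∑ₖ (eₖ ⌟ T)·ψₖ`. -/
theorem stmt12 {n : ℕ} (e : OrthonormalBasis (Fin n) ℝ V)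
    (T : ExteriorAlgebra ℝ V) (hT : T ∈ pForms V 3)
    (M : Type*) [AddCommGroup M] [Module ℝ M]
    [Module (CliffordAlgebra (negInnerQuadraticForm V)) M]
    [IsScalarTower ℝ (CliffordAlgebra (negInnerQuadraticForm V)) M]
    (ψ : Fin n → M) :
    ∑ i : Fin n, ∑ j : Fin n, ∑ k : Fin n, eval3 T (e i) (e j) (e k) •
        ((CliffordAlgebra.ι (negInnerQuadraticForm V) (e i) *
            CliffordAlgebra.ι (negInnerQuadraticForm V) (e j)) • ψ k) =
      (2 : ℝ) • ∑ k : Fin n, exteriorToClifford (interiorProd (e k) T) • ψ k := by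
  set P : ExteriorAlgebra ℝ V → Prop := fun T =>
    ∑ i : Fin n, ∑ j : Fin n, ∑ k : Fin n, eval3 T (e i) (e j) (e k) •
        ((CliffordAlgebra.ι (negInnerQuadraticForm V) (e i) *
            CliffordAlgebra.ι (negInnerQuadraticForm V) (e j)) • ψ k) =
      (2 : ℝ) • ∑ k : Fin n, exteriorToClifford (interiorProd (e k) T) • ψ k with hP
  show P T
  have hadd : ∀ a b : ExteriorAlgebra ℝ V, P a → P b → P (a + b) := by
    intro a b ha hb
    simp only [hP] at ha hb ⊢
    simp only [eval3_add, add_smul, Finset.sum_add_distrib, ip_add, etc_add, smul_add]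
    rw [ha, hb]
  have hkey : ∀ x y z : V, P (ExteriorAlgebra.ι ℝ x * ExteriorAlgebra.ι ℝ y *
      ExteriorAlgebra.ι ℝ z) := by
    intro x y z
    simp only [hP]
    calc ∑ i : Fin n, ∑ j : Fin n, ∑ k : Fin n,
          eval3 (ExteriorAlgebra.ι ℝ x * ExteriorAlgebra.ι ℝ y * ExteriorAlgebra.ι ℝ z)
            (e i) (e j) (e k) •
          ((CliffordAlgebra.ι (negInnerQuadraticForm V) (e i) *
              CliffordAlgebra.ι (negInnerQuadraticForm V) (e j)) • ψ k)
        = ∑ k : Fin n, ∑ i : Fin n, ∑ j : Fin n,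
          eval3 (ExteriorAlgebra.ι ℝ x * ExteriorAlgebra.ι ℝ y * ExteriorAlgebra.ι ℝ z)
            (e i) (e j) (e k) •
          ((CliffordAlgebra.ι (negInnerQuadraticForm V) (e i) *
              CliffordAlgebra.ι (negInnerQuadraticForm V) (e j)) • ψ k) :=
          sum_comm3 _
      _ = ∑ k : Fin n, ((2 : ℝ) • exteriorToClifford (interiorProd (e k)
            (ExteriorAlgebra.ι ℝ x * ExteriorAlgebra.ι ℝ y * ExteriorAlgebra.ι ℝ z))) • ψ k := by
          refine Finset.sum_congr rfl fun k _ => ?_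
          rw [← key_clifford e x y z (e k), Finset.sum_smul]
          refine Finset.sum_congr rfl fun i _ => ?_
          rw [Finset.sum_smul]
          refine Finset.sum_congr rfl fun j _ => ?_
          rw [smul_assoc]
      _ = (2 : ℝ) • ∑ k : Fin n, exteriorToClifford (interiorProd (e k)
            (ExteriorAlgebra.ι ℝ x * ExteriorAlgebra.ι ℝ y * ExteriorAlgebra.ι ℝ z)) • ψ k := by
          rw [Finset.smul_sum]
          exact Finset.sum_congr rfl fun k _ => smul_assoc _ _ _
  rw [pForms, pow_succ, pow_succ, pow_one] at hT
  refine Submodule.mul_induction_on hT ?_ hadd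
  intro m hm c hc
  obtain ⟨z, rfl⟩ := hc
  refine Submodule.mul_induction_on hm ?_ ?_
  · rintro a ⟨x, rfl⟩ b ⟨y, rfl⟩
    exact hkey x y z
  · intro a b ha hb
    rw [add_mul]
    exact hadd _ _ ha hb
end
end

section
/- If the dimension of V is at most 4, then for every 3-form T on V the 4-form σ_T := (1/2) ∑_{i} (e_i ⌟ T) ∧ (e_i ⌟ T) vanishes identically. -/
noncomputable section

open scoped RealInnerProductSpace

variable {V : Type*} [NormedAddCommGroup V] [InnerProductSpace ℝ V]

section Aux

variable {V : Type*} [NormedAddCommGroup V] [InnerProductSpace ℝ V]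

lemma interiorProd_ι_mul (X a : V) (γ : ExteriorAlgebra ℝ V) :
    interiorProd X (ExteriorAlgebra.ι ℝ a * γ)
      = innerₗ V X a • γ - ExteriorAlgebra.ι ℝ a * interiorProd X γ :=
  CliffordAlgebra.contractLeft_ι_mul (Q := (0 : QuadraticForm ℝ V))
    (innerₗ V X) a γ

lemma interiorProd_algebraMap (X : V) (r : ℝ) :
    interiorProd X (algebraMap ℝ (ExteriorAlgebra ℝ V) r) = 0 :=
  CliffordAlgebra.contractLeft_algebraMap (0 : QuadraticForm ℝ V) _ r

lemma interiorProd_zero (X : V) : interiorProd X (0 : ExteriorAlgebra ℝ V) = 0 :=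
  map_zero _

lemma interiorProd_add (X : V) (x y : ExteriorAlgebra ℝ V) :
    interiorProd X (x + y) = interiorProd X x + interiorProd X y :=
  map_add (CliffordAlgebra.contractLeft (Q := (0 : QuadraticForm ℝ V))
    (innerₗ V X)) x y

lemma interiorProd_interiorProd (X : V) (ω : ExteriorAlgebra ℝ V) :
    interiorProd X (interiorProd X ω) = 0 :=
  CliffordAlgebra.contractLeft_contractLeft (Q := (0 : QuadraticForm ℝ V))
    (innerₗ V X) ω

lemma interiorProd_mul (X : V) :
    ∀ (p : ℕ) (S : ExteriorAlgebra ℝ V), S ∈ pForms V p → ∀ γ : ExteriorAlgebra ℝ V,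
      interiorProd X (S * γ)
        = interiorProd X S * γ + ((-1 : ℝ) ^ p) • (S * interiorProd X γ) := by
  intro p
  induction p with
  | zero =>
      intro S hS γ
      rw [pForms, pow_zero] at hS
      obtain ⟨r, rfl⟩ := Submodule.mem_one.mp hS
      rw [interiorProd_algebraMap, Algebra.algebraMap_eq_smul_one, smul_mul_assoc,
        smul_mul_assoc, one_mul, one_mul]
      simp [interiorProd]
  | succ q ih =>
      intro S hS
      rw [pForms, pow_succ'] at hS
      refine Submodule.mul_induction_on hS ?_ ?_
      · rintro m ⟨a, rfl⟩ y hy γ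
        rw [mul_assoc, interiorProd_ι_mul, ih y hy γ, interiorProd_ι_mul]
        simp only [mul_add, sub_mul, smul_mul_assoc, mul_smul_comm, mul_assoc,
          pow_succ, mul_neg_one, neg_smul]
        module
      · intro x y hx hy γ
        rw [add_mul, interiorProd_add, hx γ, hy γ, interiorProd_add,
          add_mul x y (interiorProd X γ), smul_add,
          add_mul (interiorProd X x) (interiorProd X y) γ]
        abel

lemma interiorProd_mem (X : V) :
    ∀ (p : ℕ) (S : ExteriorAlgebra ℝ V), S ∈ pForms V (p + 1) →
      interiorProd X S ∈ pForms V p := by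
  intro p
  induction p with
  | zero =>
      rintro S hS
      rw [pForms, pow_one] at hS
      obtain ⟨a, rfl⟩ := hS
      rw [show interiorProd X (ExteriorAlgebra.ι ℝ a)
          = algebraMap ℝ (ExteriorAlgebra ℝ V) (innerₗ V X a) from
        CliffordAlgebra.contractLeft_ι (0 : QuadraticForm ℝ V) _ a]
      rw [pForms, pow_zero]
      exact Submodule.mem_one.mpr ⟨_, rfl⟩
  | succ q ih =>
      intro S hS
      rw [pForms, pow_succ'] at hS
      refine Submodule.mul_induction_on hS ?_ ?_
      · rintro m ⟨a, rfl⟩ y hy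
        rw [interiorProd_ι_mul]
        refine sub_mem ?_ ?_
        · exact Submodule.smul_mem _ _ hy
        · rw [pForms, pow_succ']
          exact Submodule.mul_mem_mul (LinearMap.mem_range_self _ a) (ih y hy)
      · intro x y hx hy
        rw [interiorProd_add]
        exact add_mem hx hy

lemma eq_zero_of_mem_pForms_five (hrank : Module.finrank ℝ V ≤ 4)
    [FiniteDimensional ℝ V]
    {x : ExteriorAlgebra ℝ V} (hx : x ∈ pForms V 5) : x = 0 := by
  haveI : NoZeroSMulDivisors ℝ (ExteriorAlgebra ℝ V) :=
    ⟨fun {c x} h => by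
      rcases eq_or_ne c 0 with hc | hc
      · exact Or.inl hc
      · refine Or.inr ?_
        have h2 := congrArg (fun z => c⁻¹ • z) h
        simpa [smul_smul, inv_mul_cancel₀ hc] using h2⟩
  rw [pForms] at hx
  have hx' : x ∈ Submodule.span ℝ (Set.range (ExteriorAlgebra.ιMulti ℝ 5 (M := V))) := by
    rw [ExteriorAlgebra.ιMulti_span_fixedDegree]; exact hx
  have hle : Submodule.span ℝ (Set.range (ExteriorAlgebra.ιMulti ℝ 5 (M := V)))
      ≤ (⊥ : Submodule ℝ (ExteriorAlgebra ℝ V)) := by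
    rw [Submodule.span_le]
    rintro _ ⟨v, rfl⟩
    have hdep : ¬ LinearIndependent ℝ v := by
      intro hli
      have := hli.fintype_card_le_finrank
      simp only [Fintype.card_fin] at this
      omega
    simpa using AlternatingMap.map_linearDependent (ExteriorAlgebra.ιMulti ℝ 5) v hdep
  simpa using hle hx' 

end Aux

/-- If `dim V ≤ 4`, then `σ_T := (1/2) ∑ᵢ (eᵢ ⌟ T) ∧ (eᵢ ⌟ T)` vanishes for every 3-form `T`. -/
theorem stmt14 {n : ℕ} (hn : n ≤ 4) (e : OrthonormalBasis (Fin n) ℝ V)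
    (T : ExteriorAlgebra ℝ V) (hT : T ∈ pForms V 3) :
    (1/2 : ℝ) • ∑ i : Fin n, interiorProd (e i) T * interiorProd (e i) T = 0 := by
  have hfin : FiniteDimensional ℝ V := Module.Finite.of_basis e.toBasis
  have hrank : Module.finrank ℝ V ≤ 4 := by
    rw [Module.finrank_eq_card_basis e.toBasis, Fintype.card_fin]; exact hn
  have key : ∀ i : Fin n, interiorProd (e i) T * interiorProd (e i) T = 0 := by
    intro i
    set X := e i
    set β := interiorProd X T with hβdef
    have hβ : β ∈ pForms V 2 := interiorProd_mem X 2 T hT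
    have h5 : T * β ∈ pForms V 5 := by
      have h := Submodule.mul_mem_mul (M := pForms V 3) (N := pForms V 2) hT hβ
      rw [pForms, pForms, ← pow_add] at h
      exact h
    have hz : T * β = 0 := eq_zero_of_mem_pForms_five hrank h5
    have hder := interiorProd_mul X 3 T hT β
    rw [hz, interiorProd_zero, interiorProd_interiorProd, mul_zero, smul_zero,
      add_zero] at hder
    exact hder.symm
  simp only [key, Finset.sum_const_zero, smul_zero]
end
end
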